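/- A CPM β_t can be reconstructed from its induced family of risk measures: if z_d = −∞, then for every X ∈ L^{bb}_T, β_t(X) = ess sup{φ simple F_t-measurable, φ < z_u, φ = Σ_{i=1}^n z_i 1_{B_i}, such that ρ^{z_i}_t(X) < 0 on B_i for all i}. -/

import Mathlib

open MeasureTheory Filter Set Topology

noncomputable section

variable {Ω : Type*}

/-- The lattice of `m`-measurable random variables bounded from below
(possibly `+∞`-valued). -/
def Lbb (m : MeasurableSpace Ω) : Set (Ω → EReal) :=
  {X | Measurable[m] X ∧ ∃ c : ℝ, ∀ ω, (c : EReal) ≤ X ω}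

/-- `ρ` is the `P`-essential infimum of the family `S` of (`m`-measurable)
random variables. -/
def IsEssInfFam {F : MeasurableSpace Ω} (m : MeasurableSpace Ω) (P : @Measure Ω F)
    (S : Set (Ω → EReal)) (ρ : Ω → EReal) : Prop :=
  Measurable[m] ρ ∧ (∀ ξ ∈ S, ∀ᵐ ω ∂P, ρ ω ≤ ξ ω) ∧
    ∀ η : Ω → EReal, Measurable[m] η → (∀ ξ ∈ S, ∀ᵐ ω ∂P, η ω ≤ ξ ω) →
      ∀ᵐ ω ∂P, η ω ≤ ρ ω

/-- `g` is, on the set `C`, the `P`-essential supremum of the family `S`. -/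
def IsEssSupFamOn {F : MeasurableSpace Ω} (m : MeasurableSpace Ω) (P : @Measure Ω F)
    (S : Set (Ω → EReal)) (g : Ω → EReal) (C : Set Ω) : Prop :=
  (∀ φ ∈ S, ∀ᵐ ω ∂P, ω ∈ C → φ ω ≤ g ω) ∧
    ∀ η : Ω → EReal, Measurable[m] η → (∀ φ ∈ S, ∀ᵐ ω ∂P, ω ∈ C → φ ω ≤ η ω) →
      ∀ᵐ ω ∂P, ω ∈ C → g ω ≤ η ω

/-- A conditional performance measure (CPM) `β` conditional to the sub-σ-algebra `m`,
defined on `F`-measurable variables bounded from below, with non-random essential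
bounds `zd < zu`. -/
structure IsCPM (F m : MeasurableSpace Ω) (P : @Measure Ω F)
    (β : (Ω → EReal) → Ω → EReal) (zd zu : EReal) : Prop where
  maps : ∀ X ∈ Lbb F, β X ∈ Lbb m
  quasiConcave : ∀ X ∈ Lbb F, ∀ Y ∈ Lbb F, ∀ c : ℝ, 0 ≤ c → c ≤ 1 →
    ∀ᵐ ω ∂P, min (β X ω) (β Y ω) ≤
      β (fun ω' => (c : EReal) * X ω' + ((1 - c : ℝ) : EReal) * Y ω') ω
  lt_bounds : zd < zu
  le_zu : ∀ X ∈ Lbb F, ∀ᵐ ω ∂P, β X ω ≤ zu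
  zu_least : ∀ η : Ω → EReal, Measurable[m] η →
    (∀ X ∈ Lbb F, ∀ᵐ ω ∂P, β X ω ≤ η ω) → ∀ᵐ ω ∂P, zu ≤ η ω
  zd_le : ∀ X ∈ Lbb F, ∀ᵐ ω ∂P, zd ≤ β X ω
  zd_greatest : ∀ η : Ω → EReal, Measurable[m] η →
    (∀ X ∈ Lbb F, ∀ᵐ ω ∂P, η ω ≤ β X ω) → ∀ᵐ ω ∂P, η ω ≤ zd
  mono : ∀ X Y : Ω → EReal, (∀ ω, Y ω ≤ X ω) → ∀ᵐ ω ∂P, β Y ω ≤ β X ω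
  strictShift : ∀ X ∈ Lbb F, ∀ c : ℝ, 0 < c →
    ∀ᵐ ω ∂P, β X ω < zu → zd < β (fun ω' => X ω' + (c : EReal)) ω →
      β X ω < β (fun ω' => X ω' + (c : EReal)) ω
  contBelow : ∀ (Xs : ℕ → Ω → EReal) (X : Ω → EReal), (∀ n, Xs n ∈ Lbb F) → X ∈ Lbb F →
    (∀ ω, Monotone fun n => Xs n ω) → (∀ ω, X ω = ⨆ n, Xs n ω) →
    ∀ᵐ ω ∂P, β X ω = ⨆ n, β (Xs n) ω
  loc : ∀ X ∈ Lbb F, ∀ B : Set Ω, MeasurableSet[m] B →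
    ∀ᵐ ω ∂P, ω ∈ B → β X ω = β (B.indicator X) ω
  levelBdd : ∀ z : ℝ, zd < (z : EReal) → (z : EReal) < zu →
    ∃ x : ℝ, ∀ ξ ∈ Lbb m, (∀ᵐ ω ∂P, (z : EReal) ≤ β ξ ω) → ∀ᵐ ω ∂P, (x : EReal) ≤ ξ ω

/-- Scale invariance of a conditional performance measure. -/
def ScaleInvariant (F : MeasurableSpace Ω) (P : @Measure Ω F)
    (β : (Ω → EReal) → Ω → EReal) : Prop :=
  ∀ X ∈ Lbb F, ∀ c : ℝ, 0 < c → ∀ᵐ ω ∂P, β (fun ω' => (c : EReal) * X ω') ω = β X ω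

/-- The set `M^z_t(X) = {ξ ∈ L^{bb}_t : β_t(X + ξ) ≥ z}`. -/
def Mset (F m : MeasurableSpace Ω) (P : @Measure Ω F)
    (β : (Ω → EReal) → Ω → EReal) (z : ℝ) (X : Ω → EReal) : Set (Ω → EReal) :=
  {ξ | ξ ∈ Lbb m ∧ ∀ᵐ ω ∂P, (z : EReal) ≤ β (fun ω' => X ω' + ξ ω') ω}

/-- The family of simple `m`-measurable variables `φ = Σ z_i 1_{B_i}` with
`zd < φ < zu` and `ρ^{z_i} < 0` on `B_i ∩ C`. -/
def SimpleFam {F : MeasurableSpace Ω} (m : MeasurableSpace Ω) (P : @Measure Ω F)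
    (ρ : ℝ → Ω → EReal) (zd zu : EReal) (C : Set Ω) : Set (Ω → EReal) :=
  {φ | ∃ (n : ℕ) (zs : Fin n → ℝ) (Bs : Fin n → Set Ω),
    (∀ i, MeasurableSet[m] (Bs i)) ∧ Pairwise (Function.onFun Disjoint Bs) ∧
    (⋃ i, Bs i) = Set.univ ∧
    (∀ i, zd < (zs i : EReal) ∧ (zs i : EReal) < zu) ∧
    (∀ i, ∀ ω ∈ Bs i, φ ω = (zs i : EReal)) ∧
    (∀ i, ∀ᵐ ω ∂P, ω ∈ Bs i ∩ C → ρ (zs i) ω < 0)}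

/-- A standard family of conditional convex risk measures `(σ^z)_{z ∈ (zd, zu)}`. -/
structure IsStdFamily (F m : MeasurableSpace Ω) (P : @Measure Ω F)
    (σ : ℝ → (Ω → EReal) → Ω → EReal) (zd zu : EReal) : Prop where
  lt_bounds : zd < zu
  maps : ∀ z : ℝ, zd < (z : EReal) → (z : EReal) < zu → ∀ X ∈ Lbb F,
    Measurable[m] (σ z X) ∧ ∃ C : ℝ, ∀ ω, σ z X ω ≤ (C : EReal)
  boundedOnBounded : ∀ z : ℝ, zd < (z : EReal) → (z : EReal) < zu → ∀ X ∈ Lbb F,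
    (∃ C : ℝ, ∀ ω, X ω ≤ (C : EReal)) → ∃ c : ℝ, ∀ ω, (c : EReal) ≤ σ z X ω
  convex : ∀ z : ℝ, zd < (z : EReal) → (z : EReal) < zu →
    ∀ X ∈ Lbb F, ∀ Y ∈ Lbb F, ∀ c : ℝ, 0 ≤ c → c ≤ 1 →
    ∀ᵐ ω ∂P, σ z (fun ω' => (c : EReal) * X ω' + ((1 - c : ℝ) : EReal) * Y ω') ω ≤
      (c : EReal) * σ z X ω + ((1 - c : ℝ) : EReal) * σ z Y ω
  anti : ∀ z : ℝ, zd < (z : EReal) → (z : EReal) < zu → ∀ X Y : Ω → EReal,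
    (∀ ω, Y ω ≤ X ω) → ∀ᵐ ω ∂P, σ z X ω ≤ σ z Y ω
  transInv : ∀ z : ℝ, zd < (z : EReal) → (z : EReal) < zu → ∀ X ∈ Lbb F, ∀ ξ ∈ Lbb m,
    ∀ᵐ ω ∂P, σ z (fun ω' => X ω' + ξ ω') ω = σ z X ω - ξ ω
  loc : ∀ z : ℝ, zd < (z : EReal) → (z : EReal) < zu → ∀ X ∈ Lbb F,
    ∀ B : Set Ω, MeasurableSet[m] B →
    ∀ᵐ ω ∂P, ω ∈ B → σ z X ω = σ z (B.indicator X) ω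
  contBelow : ∀ z : ℝ, zd < (z : EReal) → (z : EReal) < zu →
    ∀ (Xs : ℕ → Ω → EReal) (X : Ω → EReal), (∀ n, Xs n ∈ Lbb F) → X ∈ Lbb F →
    (∀ ω, Monotone fun n => Xs n ω) → (∀ ω, X ω = ⨆ n, Xs n ω) →
    ∀ᵐ ω ∂P, σ z X ω = ⨅ n, σ z (Xs n) ω
  paths : ∀ X ∈ Lbb F, ∀ᵐ ω ∂P,
    MonotoneOn (fun z : ℝ => σ z X ω) {z : ℝ | zd < (z : EReal) ∧ (z : EReal) < zu} ∧
    ContinuousOn (fun z : ℝ => σ z X ω) {z : ℝ | zd < (z : EReal) ∧ (z : EReal) < zu}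
  botLim : zd = ⊥ →
    Tendsto (fun z : ℝ => essSup (σ z (fun _ => 0)) P) atBot (𝓝 (⊥ : EReal))

/-- The set `B_X = ∩_{z ∈ (zd,zu)} {σ^z(X) ≥ 0}`. -/
def BXset (σ : ℝ → (Ω → EReal) → Ω → EReal) (zd zu : EReal) (X : Ω → EReal) : Set Ω :=
  {ω | ∀ z : ℝ, zd < (z : EReal) → (z : EReal) < zu → 0 ≤ σ z X ω}

/-- `g` is the value at `X` of the performance measure generated by the standard
family `σ`:  `g = zd 1_{B_X} + 1_{B_X^c} esssup{φ simple : σ^{z_i}(X) < 0 on B_i ∩ B_X^c}`. -/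
def GeneratedBy (F m : MeasurableSpace Ω) (P : @Measure Ω F)
    (σ : ℝ → (Ω → EReal) → Ω → EReal) (zd zu : EReal)
    (X : Ω → EReal) (g : Ω → EReal) : Prop :=
  (∀ᵐ ω ∂P, ω ∈ BXset σ zd zu X → g ω = zd) ∧
  IsEssSupFamOn m P (SimpleFam m P (fun z => σ z X) zd zu ((BXset σ zd zu X)ᶜ)) g
    ((BXset σ zd zu X)ᶜ)
namespace Stmt13Aux

variable {Ω : Type*} {F m : MeasurableSpace Ω} {P : @Measure Ω F}
  {β : (Ω → EReal) → Ω → EReal} {zu : EReal}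


lemma ereal_add_eq (x y : EReal) :
    x + y = ⨆ q : ℚ, if ((q:ℝ):EReal) ≤ x then ((q:ℝ):EReal) + y else ⊥ := by
  refine le_antisymm ?_ (iSup_le fun q => ?_)
  · induction x using EReal.rec with
    | bot => simp
    | top =>
      induction y using EReal.rec with
      | bot => simp
      | top =>
        rw [le_iSup_iff]
        intro b hb
        have := hb 0
        simp only [le_top, if_true] at this
        simpa [EReal.coe_add_top] using this
      | coe s =>
        rw [le_iSup_iff]
        intro b hb
        rw [EReal.top_add_coe]
        by_contra hb'
        induction b using EReal.rec with
        | bot =>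
          have := hb 0
          rw [if_pos le_top, le_bot_iff, ← EReal.coe_add] at this
          exact EReal.coe_ne_bot _ this
        | top => exact hb' le_top
        | coe t =>
          obtain ⟨q, hq⟩ := exists_rat_gt (t - s)
          have := hb q
          simp only [le_top, if_true, ← EReal.coe_add, EReal.coe_le_coe_iff] at this
          linarith
    | coe r =>
      induction y using EReal.rec with
      | bot => simp
      | top =>
        rw [le_iSup_iff]
        intro b hb
        obtain ⟨q, hq⟩ := exists_rat_lt r
        have := hb q
        rw [if_pos (by exact_mod_cast hq.le), EReal.coe_add_top] at this
        rw [EReal.coe_add_top]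
        exact this
      | coe s =>
        rw [le_iSup_iff]
        intro b hb
        induction b using EReal.rec with
        | bot =>
          obtain ⟨q, hq⟩ := exists_rat_lt r
          have := hb q
          rw [if_pos (by exact_mod_cast hq.le), le_bot_iff, ← EReal.coe_add] at this
          exact absurd this (EReal.coe_ne_bot _)
        | top => exact le_top
        | coe t =>
          rw [← EReal.coe_add, EReal.coe_le_coe_iff]
          by_contra ht
          push_neg at ht
          obtain ⟨q, hq1, hq2⟩ := exists_rat_btwn (by linarith : t - s < r)
          have := hb q
          rw [if_pos (by exact_mod_cast hq2.le), ← EReal.coe_add, EReal.coe_le_coe_iff] at this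
          linarith
  · by_cases h : ((q:ℝ):EReal) ≤ x
    · rw [if_pos h]; exact add_le_add_left h y
    · rw [if_neg h]; exact bot_le

lemma measurable_add_ereal {Ω} {M : MeasurableSpace Ω} {f g : Ω → EReal}
    (hf : Measurable[M] f) (hg : Measurable[M] g) :
    Measurable[M] fun ω => f ω + g ω := by
  have he : (fun ω => f ω + g ω)
      = fun ω => ⨆ q : ℚ, if ((q:ℝ):EReal) ≤ f ω then ((q:ℝ):EReal) + g ω else ⊥ := by
    funext ω; exact ereal_add_eq _ _
  rw [he]
  refine Measurable.iSup fun q => ?_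
  have hmono : Monotone fun y : EReal => ((q:ℝ):EReal) + y := fun a b h => add_le_add_right h _
  exact Measurable.ite (hf measurableSet_Ici) (hmono.measurable.comp hg) measurable_const

lemma lbb_bot_lt {M : MeasurableSpace Ω} {X : Ω → EReal} (hX : X ∈ Lbb M) (ω : Ω) :
    ⊥ < X ω := by
  obtain ⟨-, c, hc⟩ := hX
  exact lt_of_lt_of_le (EReal.bot_lt_coe c) (hc ω)

lemma lbb_add (hm : m ≤ F) {X ξ : Ω → EReal} (hX : X ∈ Lbb F) (hξ : ξ ∈ Lbb m) :
    (fun ω => X ω + ξ ω) ∈ Lbb F := by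
  obtain ⟨hXm, c, hc⟩ := hX
  obtain ⟨hξm, d, hd⟩ := hξ
  refine ⟨measurable_add_ereal hXm (hξm.mono hm le_rfl), c + d, fun ω => ?_⟩
  rw [EReal.coe_add]
  exact add_le_add (hc ω) (hd ω)

lemma loc_le (hCPM : IsCPM F m P β ⊥ zu) {X Y : Ω → EReal} (hX : X ∈ Lbb F) (hY : Y ∈ Lbb F)
    {B : Set Ω} (hB : MeasurableSet[m] B) (h : ∀ ω ∈ B, Y ω ≤ X ω) :
    ∀ᵐ ω ∂P, ω ∈ B → β Y ω ≤ β X ω := by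
  have h1 := hCPM.loc Y hY B hB
  have h2 := hCPM.loc X hX B hB
  have h3 := hCPM.mono (B.indicator X) (B.indicator Y) (fun ω => by
    by_cases hω : ω ∈ B
    · simpa [Set.indicator_of_mem hω] using h ω hω
    · simp [Set.indicator_of_notMem hω])
  filter_upwards [h1, h2, h3] with ω h1 h2 h3 hωB
  rw [h1 hωB, h2 hωB]
  exact h3

lemma loc_eq (hCPM : IsCPM F m P β ⊥ zu) {X Y : Ω → EReal} (hX : X ∈ Lbb F) (hY : Y ∈ Lbb F)
    {B : Set Ω} (hB : MeasurableSet[m] B) (h : ∀ ω ∈ B, Y ω = X ω) :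
    ∀ᵐ ω ∂P, ω ∈ B → β Y ω = β X ω := by
  have e1 := loc_le hCPM hX hY hB (fun ω hω => (h ω hω).le)
  have e2 := loc_le hCPM hY hX hB (fun ω hω => (h ω hω).ge)
  filter_upwards [e1, e2] with ω e1 e2 hωB
  exact le_antisymm (e1 hωB) (e2 hωB)

lemma beta_top (hCPM : IsCPM F m P β ⊥ zu) :
    ∀ᵐ ω ∂P, β (fun _ => (⊤ : EReal)) ω = zu := by
  have hW : (fun _ : Ω => (⊤ : EReal)) ∈ Lbb F := ⟨measurable_const, 0, fun _ => le_top⟩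
  have h1 := hCPM.le_zu _ hW
  have h2 := hCPM.zu_least (β _) (hCPM.maps _ hW).1
    (fun X' hX' => hCPM.mono _ X' (fun ω => le_top))
  filter_upwards [h1, h2] with ω h1 h2
  exact le_antisymm h1 h2


lemma rho_nonneg (hm : m ≤ F) (hCPM : IsCPM F m P β ⊥ zu) {X : Ω → EReal} (hX : X ∈ Lbb F)
    (z : ℝ) {ρz : Ω → EReal} (hρz : IsEssInfFam m P (Mset F m P β z X) ρz) :
    ∀ᵐ ω ∂P, β X ω < (z : EReal) → 0 ≤ ρz ω := by
  classical
  obtain ⟨hρm, hρle, hρgr⟩ := hρz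
  set A : Set Ω := β X ⁻¹' (Set.Iio (z : EReal)) with hAdef
  have hAm : MeasurableSet[m] A := (hCPM.maps X hX).1 measurableSet_Iio
  have hηm : Measurable[m] (A.piecewise (fun _ => (0:EReal)) (fun _ => ⊥)) :=
    Measurable.piecewise hAm measurable_const measurable_const
  have key : ∀ ξ ∈ Mset F m P β z X, ∀ᵐ ω ∂P,
      A.piecewise (fun _ => (0:EReal)) (fun _ => ⊥) ω ≤ ξ ω := by
    rintro ξ ⟨hξL, hξβ⟩
    have hBm : MeasurableSet[m] {ω | ξ ω ≤ 0} := hξL.1 measurableSet_Iic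
    have hle := loc_le hCPM hX (lbb_add hm hX hξL) hBm (fun ω hω => by
      calc X ω + ξ ω ≤ X ω + 0 := add_le_add_right hω _
        _ = X ω := add_zero _)
    filter_upwards [hle, hξβ] with ω hle hξβ
    by_cases hωA : ω ∈ A
    · rw [Set.piecewise_eq_of_mem _ _ _ hωA]
      by_contra hneg
      push_neg at hneg
      have h0 : ξ ω ≤ 0 := hneg.le
      have hzz : (z : EReal) < (z : EReal) :=
        lt_of_le_of_lt (hξβ.trans (hle h0)) hωA
      exact absurd hzz (lt_irrefl _)
    · rw [Set.piecewise_eq_of_notMem _ _ _ hωA]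
      exact bot_le
  have hfin := hρgr _ hηm key
  filter_upwards [hfin] with ω hω hlt
  have hωA : ω ∈ A := hlt
  have h0 : A.piecewise (fun _ => (0:EReal)) (fun _ => ⊥) ω = 0 :=
    Set.piecewise_eq_of_mem _ _ _ hωA
  rw [← h0]
  exact hω


lemma rho_neg (hm : m ≤ F) (hCPM : IsCPM F m P β ⊥ zu) {X : Ω → EReal} (hX : X ∈ Lbb F)
    (z : ℝ) (hz : (z : EReal) < zu) {ρz : Ω → EReal}
    (hρz : IsEssInfFam m P (Mset F m P β z X) ρz) :
    ∀ᵐ ω ∂P, (z : EReal) < β X ω → ρz ω < 0 := by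
  classical
  obtain ⟨hXmF, c, hc⟩ := hX
  have hX' : X ∈ Lbb F := ⟨hXmF, c, hc⟩
  set ε : ℕ → ℝ := fun n => 1 / (n + 1) with hεdef
  have hε_pos : ∀ n, 0 < ε n := fun n => by positivity
  have hε_le_one : ∀ n, ε n ≤ 1 := fun n => by
    rw [hεdef]
    rw [div_le_one (by positivity)]
    simp
  have hε_anti : ∀ {n k : ℕ}, n ≤ k → ε k ≤ ε n := fun {n k} h => by
    apply one_div_le_one_div_of_le (by positivity)
    have : (n : ℝ) ≤ (k : ℝ) := Nat.cast_le.mpr h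
    linarith
  set Xs : ℕ → Ω → EReal := fun n ω => X ω + ((-ε n : ℝ) : EReal) with hXsdef
  have hXsL : ∀ n, Xs n ∈ Lbb F := by
    intro n
    refine ⟨measurable_add_ereal hXmF measurable_const, c - 1, fun ω => ?_⟩
    have h1 : (c - 1 : ℝ) ≤ c + (-ε n) := by
      have := hε_le_one n; linarith
    calc ((c - 1 : ℝ) : EReal) ≤ ((c + (-ε n) : ℝ) : EReal) := EReal.coe_le_coe_iff.mpr h1
      _ = (c : EReal) + ((-ε n : ℝ) : EReal) := EReal.coe_add _ _
      _ ≤ X ω + ((-ε n : ℝ) : EReal) := add_le_add_left (hc ω) _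
  have hXs_mono : ∀ ω, Monotone fun n => Xs n ω := by
    intro ω n k h
    exact add_le_add_right (EReal.coe_le_coe_iff.mpr (neg_le_neg (hε_anti h))) _
  have hXs_sup : ∀ ω, X ω = ⨆ n, Xs n ω := by
    intro ω
    refine le_antisymm ?_ (iSup_le fun n => ?_)
    · rcases eq_top_or_lt_top (X ω) with htop | hlt
      · have h0 : Xs 0 ω = ⊤ := by
          rw [hXsdef]
          simp only [htop]
          exact EReal.top_add_coe _
        rw [htop, ← h0]
        exact le_iSup (fun n => Xs n ω) 0
      · obtain ⟨r, hr⟩ : ∃ r : ℝ, X ω = (r : EReal) :=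
          ⟨(X ω).toReal, (EReal.coe_toReal hlt.ne (lbb_bot_lt hX' ω).ne').symm⟩
        rw [hr]
        rw [le_iSup_iff]
        intro b hb
        have hb' : ∀ n, ((r - ε n : ℝ) : EReal) ≤ b := by
          intro n
          have := hb n
          rw [hXsdef] at this
          simp only [hr, ← EReal.coe_add] at this
          rwa [sub_eq_add_neg]
        induction b using EReal.rec with
        | bot => exact absurd (le_bot_iff.mp (hb' 0)) (EReal.coe_ne_bot _)
        | top => exact le_top
        | coe s =>
          rw [EReal.coe_le_coe_iff]
          by_contra hs
          push_neg at hs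
          obtain ⟨n, hn⟩ := exists_nat_one_div_lt (by linarith : (0:ℝ) < r - s)
          have := EReal.coe_le_coe_iff.mp (hb' n)
          have hεn : ε n < r - s := by
            rw [hεdef]
            exact_mod_cast hn
          linarith
    · calc Xs n ω ≤ X ω + 0 :=
          add_le_add_right (by exact_mod_cast neg_nonpos.mpr (hε_pos n).le) _
        _ = X ω := add_zero _
  have hcont := hCPM.contBelow Xs X hXsL hX' hXs_mono hXs_sup
  set Bn : ℕ → Set Ω := fun n => β (Xs n) ⁻¹' (Set.Ioi (z : EReal)) with hBndef
  have hBnm : ∀ n, MeasurableSet[m] (Bn n) := fun n =>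
    (hCPM.maps _ (hXsL n)).1 measurableSet_Ioi
  set g : ℕ → Ω → EReal :=
    fun n => (Bn n).piecewise (fun _ => ((-ε n : ℝ) : EReal)) (fun _ => ⊤) with hgdef
  set ξ : Ω → EReal := fun ω => ⨅ n, g n ω with hξdef
  have hξm : Measurable[m] ξ := Measurable.iInf fun n =>
    Measurable.piecewise (hBnm n) measurable_const measurable_const
  have hξlb : ∀ ω, ((-1 : ℝ) : EReal) ≤ ξ ω := by
    intro ω
    refine le_iInf fun n => ?_
    by_cases hω : ω ∈ Bn n
    · rw [hgdef]
      simp only [Set.piecewise_eq_of_mem _ _ _ hω]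
      exact EReal.coe_le_coe_iff.mpr (by have := hε_le_one n; linarith)
    · rw [hgdef]
      simp only [Set.piecewise_eq_of_notMem _ _ _ hω]
      exact le_top
  have hξL : ξ ∈ Lbb m := ⟨hξm, -1, hξlb⟩
  have hξBn : ∀ n ω, ω ∈ Bn n → ξ ω ≤ ((-ε n : ℝ) : EReal) := by
    intro n ω hω
    calc ξ ω ≤ g n ω := iInf_le _ n
      _ = ((-ε n : ℝ) : EReal) := Set.piecewise_eq_of_mem _ _ _ hω
  -- value of ξ on the disjointified pieces
  set Cn : ℕ → Set Ω := fun n => Bn n \ (⋃ k, ⋃ (_ : k < n), Bn k) with hCndef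
  have hCnm : ∀ n, MeasurableSet[m] (Cn n) := fun n =>
    (hBnm n).diff (MeasurableSet.iUnion fun k => MeasurableSet.iUnion fun _ => hBnm k)
  have hCn_val : ∀ n ω, ω ∈ Cn n → ξ ω = ((-ε n : ℝ) : EReal) := by
    rintro n ω ⟨hωn, hnot⟩
    refine le_antisymm (hξBn n ω hωn) (le_iInf fun k => ?_)
    by_cases hωk : ω ∈ Bn k
    · have hnk : n ≤ k := by
        by_contra hlt
        push_neg at hlt
        exact hnot (Set.mem_iUnion.mpr ⟨k, Set.mem_iUnion.mpr ⟨hlt, hωk⟩⟩)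
      rw [hgdef]
      simp only [Set.piecewise_eq_of_mem _ _ _ hωk]
      exact EReal.coe_le_coe_iff.mpr (neg_le_neg (hε_anti hnk))
    · rw [hgdef]
      simp only [Set.piecewise_eq_of_notMem _ _ _ hωk]
      exact le_top
  have hCtop_val : ∀ ω, (∀ n, ω ∉ Bn n) → ξ ω = ⊤ := by
    intro ω hω
    have : ∀ n, g n ω = ⊤ := fun n => Set.piecewise_eq_of_notMem _ _ _ (hω n)
    rw [hξdef]
    simp only [this, iInf_const]
  have hsumL : (fun ω => X ω + ξ ω) ∈ Lbb F := lbb_add hm hX' hξL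
  -- a.e. z ≤ β (X + ξ) on each piece Cn
  have hmem_n : ∀ n, ∀ᵐ ω ∂P, ω ∈ Cn n → (z : EReal) ≤ β (fun ω' => X ω' + ξ ω') ω := by
    intro n
    have heq := loc_eq hCPM (hXsL n) hsumL (hCnm n) (fun ω hω => by
      rw [hXsdef]
      simp only [hCn_val n ω hω])
    filter_upwards [heq] with ω heq hω
    rw [heq hω]
    exact le_of_lt hω.1
  -- a.e. z ≤ β (X + ξ) outside all Bn
  have hmem_top : ∀ᵐ ω ∂P, (∀ n, ω ∉ Bn n) → (z : EReal) ≤ β (fun ω' => X ω' + ξ ω') ω := by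
    have hW : (fun _ : Ω => (⊤ : EReal)) ∈ Lbb F := ⟨measurable_const, 0, fun _ => le_top⟩
    set Ct : Set Ω := ⋂ n, (Bn n)ᶜ with hCtdef
    have hCtm : MeasurableSet[m] Ct := MeasurableSet.iInter fun n => (hBnm n).compl
    have heq := loc_eq hCPM hW hsumL hCtm (fun ω hω => by
      have hno : ∀ n, ω ∉ Bn n := fun n => (Set.mem_iInter.mp hω n)
      rw [hCtop_val ω hno]
      exact EReal.add_top_of_ne_bot (lbb_bot_lt hX' ω).ne')
    filter_upwards [heq, beta_top hCPM] with ω heq htop hno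
    have hωCt : ω ∈ Ct := Set.mem_iInter.mpr fun n => hno n
    rw [heq hωCt, htop]
    exact hz.le
  have hmem : ξ ∈ Mset F m P β z X := by
    refine ⟨hξL, ?_⟩
    filter_upwards [(ae_all_iff).mpr hmem_n, hmem_top] with ω h1 h2
    by_cases hex : ∃ n, ω ∈ Bn n
    · have hfind : ω ∈ Cn (Nat.find hex) := by
        refine ⟨Nat.find_spec hex, ?_⟩
        intro hmem'
        obtain ⟨k, hk⟩ := Set.mem_iUnion.mp hmem'
        obtain ⟨hklt, hωk⟩ := Set.mem_iUnion.mp hk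
        exact Nat.find_min hex hklt hωk
      exact h1 _ hfind
    · push_neg at hex
      exact h2 hex
  have hρle := hρz.2.1 ξ hmem
  filter_upwards [hρle, hcont] with ω h1 h2 hlt
  rw [h2] at hlt
  obtain ⟨n, hn⟩ := lt_iSup_iff.mp hlt
  have hωBn : ω ∈ Bn n := hn
  calc ρz ω ≤ ξ ω := h1
    _ ≤ ((-ε n : ℝ) : EReal) := hξBn n ω hωBn
    _ < 0 := by
      rw [← EReal.coe_zero]
      exact EReal.coe_lt_coe_iff.mpr (by linarith [hε_pos n])

end Stmt13Aux
open Stmt13Aux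
/-- reconstruction of a CPM with `zd = −∞` from its induced family:
`β_t(X)` is the essential supremum of the simple variables `φ = Σ z_i 1_{B_i}`, `φ < zu`,
with `ρ^{z_i}_t(X) < 0` on `B_i`. -/
theorem stmt_13 {Ω : Type*} (F m : MeasurableSpace Ω) (hm : m ≤ F) (P : @Measure Ω F)
    (β : (Ω → EReal) → Ω → EReal) (zu : EReal)
    (hCPM : IsCPM F m P β ⊥ zu)
    (X : Ω → EReal) (hX : X ∈ Lbb F)
    (ρ : ℝ → Ω → EReal)
    (hρ : ∀ z : ℝ, (z : EReal) < zu →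
      IsEssInfFam m P (Mset F m P β z X) (ρ z)) :
    IsEssSupFamOn m P (SimpleFam m P ρ ⊥ zu Set.univ) (β X) Set.univ := by
  classical
  constructor
  · -- every simple φ in the family is a.e. below β X
    rintro φ ⟨n, zs, Bs, hBmeas, hdisj, hcover, hbnds, hval, hneg⟩
    have hup : ∀ i : Fin n, ∀ᵐ ω ∂P, ω ∈ Bs i → (zs i : EReal) ≤ β X ω := by
      intro i
      filter_upwards [hneg i, rho_nonneg hm hCPM hX (zs i) (hρ (zs i) (hbnds i).2)]
        with ω h1 h2 hωB
      by_contra hcon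
      push_neg at hcon
      exact absurd (h1 ⟨hωB, Set.mem_univ ω⟩) (not_lt.mpr (h2 hcon))
    filter_upwards [(ae_all_iff).mpr hup] with ω hall _
    have hωu : ω ∈ ⋃ i, Bs i := hcover ▸ Set.mem_univ ω
    obtain ⟨i, hi⟩ := Set.mem_iUnion.mp hωu
    rw [hval i ω hi]
    exact hall i hi
  · -- β X is the least a.e. upper bound
    intro η hηm hη
    obtain ⟨hβm, c, hc⟩ := hCPM.maps X hX
    have Hq : ∀ q : ℚ, ∀ᵐ ω ∂P,
        ((q : ℝ) : EReal) < zu → (((q : ℝ) : EReal) < β X ω → ((q : ℝ) : EReal) ≤ η ω) := by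
      intro q
      by_cases hq : ((q : ℝ) : EReal) < zu
      · set z₀ : ℝ := min c (q : ℝ) - 1 with hz₀def
        have hz₀q : z₀ < (q : ℝ) := by
          have := min_le_right c (q : ℝ); rw [hz₀def]; linarith
        have hz₀c : z₀ < c := by
          have := min_le_left c (q : ℝ); rw [hz₀def]; linarith
        have hz₀u : (z₀ : EReal) < zu := lt_trans (EReal.coe_lt_coe_iff.mpr hz₀q) hq
        set Bq : Set Ω := β X ⁻¹' (Set.Ioi ((q : ℝ) : EReal)) with hBqdef
        have hBqm : MeasurableSet[m] Bq := hβm measurableSet_Ioi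
        set φ : Ω → EReal := Bq.piecewise (fun _ => ((q : ℝ) : EReal)) (fun _ => (z₀ : EReal))
          with hφdef
        have hφS : φ ∈ SimpleFam m P ρ ⊥ zu Set.univ := by
          refine ⟨2, fun i => if i = 0 then (q : ℝ) else z₀,
            fun i => if i = 0 then Bq else Bqᶜ, ?_, ?_, ?_, ?_, ?_, ?_⟩
          · intro i; by_cases h : i = 0 <;> simp [h, hBqm, hBqm.compl]
          · intro i j hij
            fin_cases i <;> fin_cases j <;>
              simp_all [Function.onFun, disjoint_compl_right, disjoint_compl_left]
          · ext ω
            simp only [Set.mem_iUnion, Set.mem_univ, iff_true]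
            by_cases hω : ω ∈ Bq
            · exact ⟨0, by simp [hω]⟩
            · exact ⟨1, by simp [hω]⟩
          · intro i
            refine ⟨EReal.bot_lt_coe _, ?_⟩
            by_cases h : i = 0 <;> simp [h]
            exacts [hq, hz₀u]
          · intro i ω hω
            by_cases h : i = 0 <;> simp only [h, if_true, if_false] at hω ⊢ <;>
              rw [hφdef]
            · exact Set.piecewise_eq_of_mem _ _ _ hω
            · exact Set.piecewise_eq_of_notMem _ _ _ hω
          · intro i
            by_cases h : i = 0
            · filter_upwards [rho_neg hm hCPM hX (q : ℝ) hq (hρ (q : ℝ) hq)] with ω hω hmem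
              simp only [h, if_true] at hmem ⊢
              exact hω hmem.1
            · filter_upwards [rho_neg hm hCPM hX z₀ hz₀u (hρ z₀ hz₀u)] with ω hω hmem
              simp only [h, if_false] at hmem ⊢
              exact hω (lt_of_lt_of_le (EReal.coe_lt_coe_iff.mpr hz₀c) (hc ω))
        have hφη := hη φ hφS
        filter_upwards [hφη] with ω h _ hlt
        have hωBq : ω ∈ Bq := hlt
        have h2 := h (Set.mem_univ ω)
        rw [hφdef] at h2
        rwa [Set.piecewise_eq_of_mem _ _ _ hωBq] at h2
      · exact Filter.Eventually.of_forall fun ω h => absurd h hq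
    filter_upwards [(ae_all_iff).mpr Hq, hCPM.le_zu X hX] with ω hallq hzu _
    by_contra hcon
    push_neg at hcon
    obtain ⟨t, ht1, ht2⟩ := EReal.exists_rat_btwn_of_lt hcon
    have h1 : ((t : ℝ) : EReal) < zu := lt_of_lt_of_le ht2 hzu
    exact absurd (hallq t h1 ht2) (not_le.mpr ht1)
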